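/- There exists a universal constant K > 0 such that for every d > 0, every real Gaussian random variable X with mean 0 and variance 1/d, and all reals b and ε: |E[X | X ≤ (b+ε)/√d] + φ(b)/(Φ(b)√d)| ≤ K|ε|/√d and |E[X | X ≥ (b+ε)/√d] − φ(b)/((1−Φ(b))√d)| ≤ K|ε|/√d, where E[X | A] denotes E[X·1_A]/P[A]. -/

import Mathlib

open MeasureTheory ProbabilityTheory Real Set Filter Topology

/-- CDF of the standard normal distribution `N(0,1)`. -/
noncomputable def stdNormalCDF (t : ℝ) : ℝ :=
  (gaussianReal 0 1 (Set.Iic t)).toReal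

/-- Density of the standard normal distribution `N(0,1)`. -/
noncomputable def stdNormalPDF (t : ℝ) : ℝ :=
  Real.exp (-t ^ 2 / 2) / Real.sqrt (2 * Real.pi)

/-- Conditional expectation `E[X | A] = E[X·1_A] / P[A]` of the identity under a measure
`μ` on `ℝ`, given the event `A`. -/
noncomputable def condExpId (μ : Measure ℝ) (A : Set ℝ) : ℝ :=
  (∫ x in A, x ∂μ) / (μ A).toReal

/-- There is a universal `K > 0` such that for all `d > 0`,
`X ~ N(0, 1/d)` and all reals `b, ε`:
`|E[X | X ≤ (b+ε)/√d] + φ(b)/(Φ(b)√d)| ≤ K|ε|/√d` and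
`|E[X | X ≥ (b+ε)/√d] - φ(b)/((1-Φ(b))√d)| ≤ K|ε|/√d`. -/
lemma pdf_eq_gauss (t : ℝ) : stdNormalPDF t = gaussianPDFReal 0 1 t := by
  simp [stdNormalPDF, gaussianPDFReal, div_eq_inv_mul, mul_comm]

lemma sqrt_two_pi_pos : 0 < Real.sqrt (2 * Real.pi) :=
  Real.sqrt_pos.2 (by positivity)

lemma pdf_pos (t : ℝ) : 0 < stdNormalPDF t :=
  div_pos (Real.exp_pos _) sqrt_two_pi_pos

lemma pdf_nonneg (t : ℝ) : 0 ≤ stdNormalPDF t := (pdf_pos t).le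

lemma continuous_pdf : Continuous stdNormalPDF := by
  unfold stdNormalPDF
  fun_prop

lemma hasDerivAt_pdf (x : ℝ) : HasDerivAt stdNormalPDF (-x * stdNormalPDF x) x := by
  have h1 : HasDerivAt (fun y : ℝ => -y ^ 2 / 2) (-x) x := by
    have := ((hasDerivAt_pow 2 x).neg.div_const 2)
    simpa using this.congr_deriv (by ring)
  have h2 := (Real.hasDerivAt_exp (-x ^ 2 / 2)).comp x h1
  have h3 := h2.div_const (Real.sqrt (2 * Real.pi))
  unfold stdNormalPDF
  exact h3.congr_deriv (by ring)

lemma integrable_pdf : Integrable stdNormalPDF := by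
  have h := (integrable_exp_neg_mul_sq (by norm_num : (0:ℝ) < 1/2)).div_const
    (Real.sqrt (2 * Real.pi))
  refine h.congr (Eventually.of_forall fun x => ?_)
  unfold stdNormalPDF
  ring_nf

lemma integrable_id_mul_pdf : Integrable (fun x => x * stdNormalPDF x) := by
  have h := (integrable_mul_exp_neg_mul_sq (by norm_num : (0:ℝ) < 1/2)).div_const
    (Real.sqrt (2 * Real.pi))
  refine h.congr (Eventually.of_forall fun x => ?_)
  unfold stdNormalPDF
  ring_nf

lemma tendsto_neg_sq_div_two_atBot (l : Filter ℝ) (h : Tendsto (fun x : ℝ => x ^ 2) l atTop) :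
    Tendsto (fun x : ℝ => -x ^ 2 / 2) l atBot := by
  apply Tendsto.atBot_div_const (by norm_num : (0:ℝ) < 2)
  exact tendsto_neg_atTop_atBot.comp h

lemma tendsto_pdf_atBot : Tendsto stdNormalPDF atBot (𝓝 0) := by
  have hsq : Tendsto (fun x : ℝ => x ^ 2) atBot atTop := by
    have h0 : Tendsto (fun x : ℝ => x ^ 2) atTop atTop := tendsto_pow_atTop (by norm_num)
    have h0' : Tendsto (fun x : ℝ => -x) atBot atTop := tendsto_neg_atBot_atTop
    exact (h0.comp h0').congr fun x => by simp [Function.comp, neg_sq]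
  have h1 := tendsto_neg_sq_div_two_atBot atBot hsq
  have h2 := Real.tendsto_exp_atBot.comp h1
  have h3 := h2.div_const (Real.sqrt (2 * Real.pi))
  rw [zero_div] at h3
  exact h3

lemma tendsto_pdf_atTop : Tendsto stdNormalPDF atTop (𝓝 0) := by
  have h1 := tendsto_neg_sq_div_two_atBot atTop (tendsto_pow_atTop (by norm_num))
  have h2 := Real.tendsto_exp_atBot.comp h1
  have h3 := h2.div_const (Real.sqrt (2 * Real.pi))
  rw [zero_div] at h3
  exact h3

lemma integral_id_mul_pdf_Iic (s : ℝ) :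
    ∫ x in Iic s, x * stdNormalPDF x = -stdNormalPDF s := by
  have h := integral_Iic_of_hasDerivAt_of_tendsto
    (f := fun x => -stdNormalPDF x) (f' := fun x => x * stdNormalPDF x) (a := s) (m := 0)
    (continuous_pdf.neg.continuousWithinAt)
    (fun x _ => by
      have h := (hasDerivAt_pdf x).neg; simp only [neg_mul, neg_neg] at h; exact h)
    integrable_id_mul_pdf.integrableOn
    (by simpa using tendsto_pdf_atBot.neg)
  simpa using h

lemma integral_id_mul_pdf_Ioi (s : ℝ) :
    ∫ x in Ioi s, x * stdNormalPDF x = stdNormalPDF s := by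
  have h := integral_Ioi_of_hasDerivAt_of_tendsto
    (f := fun x => -stdNormalPDF x) (f' := fun x => x * stdNormalPDF x) (a := s) (m := 0)
    continuous_pdf.neg.continuousWithinAt
    (fun x _ => by
      have h := (hasDerivAt_pdf x).neg; simp only [neg_mul, neg_neg] at h; exact h)
    integrable_id_mul_pdf.integrableOn
    (by simpa using tendsto_pdf_atTop.neg)
  simpa using h

lemma gauss_eq_withDensity : gaussianReal 0 1 = volume.withDensity (gaussianPDF 0 1) :=
  gaussianReal_of_var_ne_zero 0 one_ne_zero

lemma setIntegral_gauss {A : Set ℝ} (hA : MeasurableSet A) (f : ℝ → ℝ) :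
    ∫ x in A, f x ∂(gaussianReal 0 1) = ∫ x in A, f x * stdNormalPDF x := by
  rw [gauss_eq_withDensity]
  have hd : gaussianPDF 0 1 = fun x => ((Real.toNNReal (gaussianPDFReal 0 1 x) : NNReal) : ENNReal) :=
    rfl
  rw [hd, setIntegral_withDensity_eq_setIntegral_smul
    ((measurable_gaussianPDFReal 0 1).real_toNNReal) f hA]
  refine setIntegral_congr_fun hA fun x _ => ?_
  rw [NNReal.smul_def, smul_eq_mul, Real.coe_toNNReal _ (gaussianPDFReal_nonneg 0 1 x),
    ← pdf_eq_gauss, mul_comm]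

lemma cdf_eq_integral (t : ℝ) : stdNormalCDF t = ∫ x in Iic t, stdNormalPDF x := by
  have h := setIntegral_gauss (measurableSet_Iic (a := t)) (fun _ => (1:ℝ))
  simpa [stdNormalCDF, measureReal_def] using h

lemma gauss_Ioi_eq_integral (t : ℝ) :
    (gaussianReal 0 1 (Ioi t)).toReal = ∫ x in Ioi t, stdNormalPDF x := by
  have h := setIntegral_gauss (measurableSet_Ioi (a := t)) (fun _ => (1:ℝ))
  simpa [measureReal_def] using h

lemma cdf_pos (t : ℝ) : 0 < stdNormalCDF t := by
  rw [cdf_eq_integral]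
  rw [setIntegral_pos_iff_support_of_nonneg_ae
    (Eventually.of_forall fun x => pdf_nonneg x) integrable_pdf.integrableOn]
  have : Function.support stdNormalPDF = univ := by
    ext x; simp [Function.support, (pdf_pos x).ne']
  simp [this, Real.volume_Iic]

lemma gauss_Ioi_pos (t : ℝ) : 0 < (gaussianReal 0 1 (Ioi t)).toReal := by
  rw [gauss_Ioi_eq_integral]
  rw [setIntegral_pos_iff_support_of_nonneg_ae
    (Eventually.of_forall fun x => pdf_nonneg x) integrable_pdf.integrableOn]
  have : Function.support stdNormalPDF = univ := by
    ext x; simp [Function.support, (pdf_pos x).ne']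
  simp [this, Real.volume_Ioi]

lemma cdf_add_Ioi (t : ℝ) : stdNormalCDF t + (gaussianReal 0 1 (Ioi t)).toReal = 1 := by
  have h := measure_add_measure_compl (μ := gaussianReal 0 1) (measurableSet_Iic (a := t))
  rw [compl_Iic, measure_univ] at h
  have := congrArg ENNReal.toReal h
  rw [ENNReal.toReal_add (measure_ne_top _ _) (measure_ne_top _ _)] at this
  simpa [stdNormalCDF] using this

lemma cdf_lt_one (t : ℝ) : stdNormalCDF t < 1 := by
  have := cdf_add_Ioi t
  have h2 := gauss_Ioi_pos t
  linarith

lemma cdf_mono : Monotone stdNormalCDF := fun a b hab =>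
  ENNReal.toReal_mono (measure_ne_top _ _) (measure_mono (Iic_subset_Iic.2 hab))

lemma hasDerivAt_cdf (x : ℝ) : HasDerivAt stdNormalCDF (stdNormalPDF x) x := by
  have key : ∀ t, stdNormalCDF t = stdNormalCDF 0 + ∫ u in (0:ℝ)..t, stdNormalPDF u := by
    intro t
    rw [cdf_eq_integral, cdf_eq_integral, ← intervalIntegral.integral_Iic_sub_Iic
      integrable_pdf.integrableOn integrable_pdf.integrableOn]
    ring
  have h : HasDerivAt (fun t => stdNormalCDF 0 + ∫ u in (0:ℝ)..t, stdNormalPDF u)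
      (stdNormalPDF x) x := by
    exact (intervalIntegral.integral_hasDerivAt_right integrable_pdf.intervalIntegrable
      continuous_pdf.stronglyMeasurable.stronglyMeasurableAtFilter
      continuous_pdf.continuousAt).const_add _
  rwa [show (fun t => stdNormalCDF 0 + ∫ u in (0:ℝ)..t, stdNormalPDF u) = stdNormalCDF
    from funext fun t => (key t).symm] at h

lemma mills_upper (x : ℝ) : -x * stdNormalCDF x ≤ stdNormalPDF x := by
  rcases le_or_gt 0 x with hx | hx
  · have := (cdf_pos x).le
    nlinarith [pdf_nonneg x]
  · have key : stdNormalCDF x ≤ (∫ t in Iic x, t * stdNormalPDF t) / x := by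
      rw [cdf_eq_integral, ← integral_div]
      refine setIntegral_mono_on integrable_pdf.integrableOn
        ((integrable_id_mul_pdf.div_const x).integrableOn) measurableSet_Iic fun t ht => ?_
      rw [le_div_iff_of_neg hx]
      have := pdf_nonneg t
      have ht' : t ≤ x := ht
      nlinarith
    rw [integral_id_mul_pdf_Iic] at key
    have h2 : stdNormalCDF x ≤ stdNormalPDF x / (-x) := by
      rw [div_neg, ← neg_div]; exact key
    rw [le_div_iff₀ (by linarith : (0:ℝ) < -x)] at h2
    nlinarith

lemma mills_lower (x : ℝ) : -x * stdNormalPDF x ≤ (x ^ 2 + 1) * stdNormalCDF x := by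
  set F : ℝ → ℝ := fun t => -t * stdNormalPDF t / (t ^ 2 + 1) with hF
  set w : ℝ → ℝ := fun t => (1 - 2 / (t ^ 2 + 1) ^ 2) * stdNormalPDF t with hw
  have hderiv : ∀ t : ℝ, HasDerivAt F (w t) t := by
    intro t
    have hden : (t : ℝ) ^ 2 + 1 ≠ 0 := by positivity
    have hnum : HasDerivAt (fun t : ℝ => -t * stdNormalPDF t)
        ((t ^ 2 - 1) * stdNormalPDF t) t := by
      have := ((hasDerivAt_id t).neg.mul (hasDerivAt_pdf t))
      refine this.congr_deriv ?_
      simp only [Pi.neg_apply, id_eq]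
      ring
    have hden' : HasDerivAt (fun t : ℝ => t ^ 2 + 1) (2 * t) t := by
      simpa using (hasDerivAt_pow 2 t).add_const 1
    have := hnum.div hden' hden
    refine this.congr_deriv ?_
    rw [hw]
    field_simp
    ring
  have hFbot : Tendsto F atBot (𝓝 0) := by
    apply squeeze_zero_norm (fun t => ?_) tendsto_pdf_atBot
    have h1 : |t| ≤ t ^ 2 + 1 := by nlinarith [abs_nonneg t, sq_abs t]
    have h2 : (0:ℝ) < t ^ 2 + 1 := by positivity
    rw [Real.norm_eq_abs, abs_div, abs_mul, abs_neg]
    rw [abs_of_pos h2, abs_of_nonneg (pdf_nonneg t), div_le_iff₀ h2]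
    have := pdf_nonneg t
    nlinarith [abs_nonneg t]
  have hwint : Integrable w := by
    have h2 : Integrable (fun t : ℝ => 2 / (t ^ 2 + 1) ^ 2 * stdNormalPDF t) := by
      refine Integrable.mono (integrable_pdf.const_mul 2) ?_ (Eventually.of_forall fun t => ?_)
      · apply Continuous.aestronglyMeasurable
        have : Continuous fun t : ℝ => 2 / (t ^ 2 + 1) ^ 2 := by
          apply Continuous.div continuous_const (by fun_prop)
          intro t; positivity
        exact this.mul continuous_pdf
      · rw [Real.norm_eq_abs, Real.norm_eq_abs]
        have h3 : (0:ℝ) < (t ^ 2 + 1) ^ 2 := by positivity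
        have h4 : (1:ℝ) ≤ (t ^ 2 + 1) ^ 2 := by nlinarith
        have := pdf_nonneg t
        rw [abs_of_nonneg (by positivity), abs_of_nonneg (by positivity)]
        rw [div_mul_eq_mul_div, div_le_iff₀ h3]
        nlinarith
    have := integrable_pdf.sub h2
    refine this.congr (Eventually.of_forall fun t => ?_)
    simp only [Pi.sub_apply, hw]; ring
  have hint : ∫ t in Iic x, w t = F x := by
    have h := integral_Iic_of_hasDerivAt_of_tendsto (f := F) (f' := w) (a := x) (m := 0)
      (hderiv x).continuousAt.continuousWithinAt
      (fun t _ => hderiv t) hwint.integrableOn hFbot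
    simpa using h
  have hcomp : ∫ t in Iic x, w t ≤ stdNormalCDF x := by
    rw [cdf_eq_integral]
    refine setIntegral_mono_on hwint.integrableOn integrable_pdf.integrableOn
      measurableSet_Iic fun t _ => ?_
    have h3 : (0:ℝ) < (t ^ 2 + 1) ^ 2 := by positivity
    have := pdf_nonneg t
    have h5 : 0 < 2 / (t ^ 2 + 1) ^ 2 := by positivity
    simp only [hw]
    nlinarith
  rw [hint] at hcomp
  have hden : (0:ℝ) < x ^ 2 + 1 := by positivity
  rw [hF] at hcomp
  rw [div_le_iff₀ hden] at hcomp
  nlinarith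

lemma sqrt_two_pi_ge : (5/2 : ℝ) ≤ Real.sqrt (2 * Real.pi) := by
  rw [show (5/2:ℝ) = Real.sqrt ((5/2)^2) by rw [Real.sqrt_sq (by norm_num)]]
  exact Real.sqrt_le_sqrt (by nlinarith [Real.pi_gt_d6])

lemma sqrt_two_pi_le : Real.sqrt (2 * Real.pi) ≤ 13/5 := by
  rw [show (13/5:ℝ) = Real.sqrt ((13/5)^2) by rw [Real.sqrt_sq (by norm_num)]]
  exact Real.sqrt_le_sqrt (by nlinarith [Real.pi_lt_d2])

lemma pdf_le (x : ℝ) : stdNormalPDF x ≤ 2/5 := by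
  have h1 : Real.exp (-x^2/2) ≤ 1 := Real.exp_le_one_iff.2 (by nlinarith [sq_nonneg x])
  unfold stdNormalPDF
  rw [div_le_iff₀ sqrt_two_pi_pos]
  nlinarith [sqrt_two_pi_ge]

lemma exp_neg_half_ge : (3/5 : ℝ) ≤ Real.exp (-(1:ℝ)/2) := by
  have hsq : Real.exp (1/2) * Real.exp (1/2) = Real.exp 1 := by
    rw [← Real.exp_add]; norm_num
  have h : Real.exp ((1:ℝ)/2) ≤ 5/3 := by
    nlinarith [Real.exp_one_lt_d9, Real.exp_pos ((1:ℝ)/2)]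
  have h2 : Real.exp (-(1:ℝ)/2) * Real.exp ((1:ℝ)/2) = 1 := by
    rw [← Real.exp_add]; norm_num
  nlinarith [Real.exp_pos (-(1:ℝ)/2)]

lemma pdf_neg_one_ge : (1/5:ℝ) ≤ stdNormalPDF (-1) := by
  unfold stdNormalPDF
  rw [le_div_iff₀ sqrt_two_pi_pos]
  have h1 : (-(-1:ℝ)^2/2) = -(1:ℝ)/2 := by norm_num
  rw [h1]
  nlinarith [sqrt_two_pi_le, exp_neg_half_ge, sqrt_two_pi_pos]

lemma cdf_neg_one : (1/10:ℝ) ≤ stdNormalCDF (-1) := by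
  have h := mills_lower (-1)
  have h2 := pdf_neg_one_ge
  norm_num at h
  linarith

lemma cdf_ge {x : ℝ} (hx : -1 ≤ x) : (1/10:ℝ) ≤ stdNormalCDF x :=
  cdf_neg_one.trans (cdf_mono hx)

lemma id_mul_pdf_le (x : ℝ) : x * stdNormalPDF x ≤ 3/10 := by
  rcases le_or_gt x 0 with hx | hx
  · have := pdf_nonneg x
    nlinarith
  · have h1 : (1:ℝ) + x^2/2 ≤ Real.exp (x^2/2) := by
      have := Real.add_one_le_exp (x^2/2); linarith
    have h2 : Real.exp (-x^2/2) * Real.exp (x^2/2) = 1 := by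
      rw [← Real.exp_add]; ring_nf; exact Real.exp_zero
    have hE := (Real.exp_pos (-x^2/2)).le
    have hE1 : Real.exp (-x^2/2) * (1 + x^2/2) ≤ 1 := by
      nlinarith [Real.exp_pos (x^2/2)]
    have hkey : x * Real.exp (-x^2/2) ≤ 3/4 := by
      nlinarith [mul_nonneg hE (by nlinarith [sq_nonneg (x - 4/3)] :
        (0:ℝ) ≤ 3/4 + 3*x^2/8 - x)]
    unfold stdNormalPDF
    rw [mul_div_assoc', div_le_iff₀ sqrt_two_pi_pos]
    nlinarith [sqrt_two_pi_ge]

noncomputable def invMills (x : ℝ) : ℝ := stdNormalPDF x / stdNormalCDF x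

lemma invMills_nonneg (x : ℝ) : 0 ≤ invMills x :=
  div_nonneg (pdf_nonneg x) (cdf_pos x).le

lemma invMills_add_nonneg (x : ℝ) : 0 ≤ x + invMills x := by
  have h := mills_upper x
  have hc := cdf_pos x
  have : -x ≤ invMills x := by
    unfold invMills
    rw [le_div_iff₀ hc]
    linarith [mills_upper x]
  linarith

lemma hasDerivAt_invMills (x : ℝ) :
    HasDerivAt invMills (-(invMills x * (x + invMills x))) x := by
  have h := (hasDerivAt_pdf x).div (hasDerivAt_cdf x) (cdf_pos x).ne'
  refine h.congr_deriv ?_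
  unfold invMills
  have hc : stdNormalCDF x ≠ 0 := (cdf_pos x).ne'
  field_simp
  ring

lemma invMills_prod_le (x : ℝ) : invMills x * (x + invMills x) ≤ 20 := by
  rcases le_or_gt (-1) x with hx | hx
  · have hc := cdf_ge hx
    have hcp := cdf_pos x
    have hg4 : invMills x ≤ 4 := by
      unfold invMills
      rw [div_le_iff₀ hcp]
      nlinarith [pdf_le x]
    have hxg : x * invMills x ≤ 3 := by
      unfold invMills
      rw [mul_div_assoc', div_le_iff₀ hcp]
      nlinarith [id_mul_pdf_le x]
    have hgn := invMills_nonneg x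
    nlinarith
  · have hxpos : (0:ℝ) < -x := by linarith
    have hcp := cdf_pos x
    have hg_le : invMills x ≤ (x^2+1)/(-x) := by
      unfold invMills
      rw [div_le_div_iff₀ hcp hxpos]
      linarith [mills_lower x]
    have hx0 : x ≠ 0 := by linarith
    have heq : x + (x^2+1)/(-x) = 1/(-x) := by field_simp; ring
    have hsum_le : x + invMills x ≤ 1/(-x) := by linarith
    have hprod := mul_le_mul hg_le hsum_le (invMills_add_nonneg x)
      (by positivity : (0:ℝ) ≤ (x^2+1)/(-x))
    have hfin : (x^2+1)/(-x) * (1/(-x)) ≤ 2 := by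
      rw [div_mul_div_comm, div_le_iff₀ (by positivity : (0:ℝ) < -x * -x)]
      nlinarith
    linarith

lemma invMills_lipschitz (a b : ℝ) : |invMills a - invMills b| ≤ 20 * |a - b| := by
  have hdiff : Differentiable ℝ invMills := fun x => (hasDerivAt_invMills x).differentiableAt
  have hlip : LipschitzWith 20 invMills := by
    apply lipschitzWith_of_nnnorm_deriv_le hdiff
    intro x
    rw [← NNReal.coe_le_coe, coe_nnnorm, Real.norm_eq_abs, (hasDerivAt_invMills x).deriv,
      abs_neg]
    push_cast
    rw [abs_of_nonneg (mul_nonneg (invMills_nonneg x) (invMills_add_nonneg x))]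
    exact invMills_prod_le x
  have := hlip.dist_le_mul a b
  rw [Real.dist_eq, Real.dist_eq] at this
  exact le_trans this (by norm_num)

lemma pdf_neg (x : ℝ) : stdNormalPDF (-x) = stdNormalPDF x := by
  unfold stdNormalPDF; rw [neg_pow]; norm_num

lemma gauss_map_neg : (gaussianReal 0 1).map (fun x : ℝ => -x) = gaussianReal 0 1 := by
  have h : (fun x : ℝ => -x) = ((-1 : ℝ) * ·) := by funext x; ring
  rw [h, gaussianReal_map_const_mul]
  norm_num

lemma gauss_Ici_eq_Ioi (x : ℝ) : gaussianReal 0 1 (Ici x) = gaussianReal 0 1 (Ioi x) := by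
  have hs : Ici x = Ioi x ∪ {x} := by
    ext y; simp [le_iff_lt_or_eq, or_comm, eq_comm]
  have hatom : gaussianReal 0 1 {x} = 0 := by
    rw [gauss_eq_withDensity, withDensity_apply _ (measurableSet_singleton x),
      Measure.restrict_singleton]
    simp
  rw [hs]
  refine le_antisymm ?_ (measure_mono subset_union_left)
  calc gaussianReal 0 1 (Ioi x ∪ {x}) ≤ gaussianReal 0 1 (Ioi x) + gaussianReal 0 1 {x} :=
        measure_union_le _ _
    _ = gaussianReal 0 1 (Ioi x) := by rw [hatom, add_zero]

lemma cdf_neg_arg (x : ℝ) : stdNormalCDF (-x) = 1 - stdNormalCDF x := by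
  have hmap : gaussianReal 0 1 (Iic (-x)) = gaussianReal 0 1 (Ici x) := by
    conv_lhs => rw [← gauss_map_neg]
    rw [Measure.map_apply measurable_neg measurableSet_Iic]
    congr 1
    ext y
    simp
  have h2 : stdNormalCDF (-x) = (gaussianReal 0 1 (Ioi x)).toReal := by
    unfold stdNormalCDF
    rw [hmap, gauss_Ici_eq_Ioi]
  rw [h2]
  linarith [cdf_add_Ioi x]

lemma integral_id_mul_pdf_Ici (s : ℝ) :
    ∫ x in Ici s, x * stdNormalPDF x = stdNormalPDF s := by
  rw [← integral_id_mul_pdf_Ioi s]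
  exact setIntegral_congr_set Ioi_ae_eq_Ici.symm

lemma var_eq {d : ℝ} (hd : 0 < d) : gaussianReal 0 (Real.toNNReal (1/d)) =
    (gaussianReal 0 1).map (((Real.sqrt d)⁻¹ : ℝ) * ·) := by
  rw [gaussianReal_map_const_mul]
  have h0 : (Real.sqrt d)⁻¹ * (0:ℝ) = 0 := by ring
  rw [h0]
  congr 1
  ext
  push_cast
  rw [Real.coe_toNNReal _ (by positivity : (0:ℝ) ≤ 1/d), mul_one, inv_pow,
    Real.sq_sqrt hd.le, one_div]

lemma preimage_Iic {d : ℝ} (hd : 0 < d) (t : ℝ) :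
    ((((Real.sqrt d)⁻¹ : ℝ) * ·) ⁻¹' Iic t) = Iic (Real.sqrt d * t) := by
  have hsd : 0 < Real.sqrt d := Real.sqrt_pos.2 hd
  ext y
  simp only [mem_preimage, mem_Iic]
  rw [inv_mul_le_iff₀ hsd]

lemma preimage_Ici {d : ℝ} (hd : 0 < d) (t : ℝ) :
    ((((Real.sqrt d)⁻¹ : ℝ) * ·) ⁻¹' Ici t) = Ici (Real.sqrt d * t) := by
  have hsd : 0 < Real.sqrt d := Real.sqrt_pos.2 hd
  ext y
  simp only [mem_preimage, mem_Ici]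
  rw [le_inv_mul_iff₀ hsd]

lemma scaled_measure_Iic {d : ℝ} (hd : 0 < d) (t : ℝ) :
    gaussianReal 0 (Real.toNNReal (1/d)) (Iic t) = gaussianReal 0 1 (Iic (Real.sqrt d * t)) := by
  rw [var_eq hd, Measure.map_apply (measurable_const_mul _) measurableSet_Iic, preimage_Iic hd]

lemma scaled_measure_Ici {d : ℝ} (hd : 0 < d) (t : ℝ) :
    gaussianReal 0 (Real.toNNReal (1/d)) (Ici t) = gaussianReal 0 1 (Ici (Real.sqrt d * t)) := by
  rw [var_eq hd, Measure.map_apply (measurable_const_mul _) measurableSet_Ici, preimage_Ici hd]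

lemma scaled_integral_Iic {d : ℝ} (hd : 0 < d) (t : ℝ) :
    ∫ x in Iic t, x ∂(gaussianReal 0 (Real.toNNReal (1/d)))
      = -stdNormalPDF (Real.sqrt d * t) / Real.sqrt d := by
  rw [var_eq hd, setIntegral_map (f := fun x : ℝ => x) measurableSet_Iic aestronglyMeasurable_id
    (measurable_const_mul _).aemeasurable, preimage_Iic hd]
  have h1 : ∫ y in Iic (Real.sqrt d * t), (Real.sqrt d)⁻¹ * y ∂(gaussianReal 0 1)
      = (Real.sqrt d)⁻¹ * ∫ y in Iic (Real.sqrt d * t), y ∂(gaussianReal 0 1) :=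
    integral_const_mul _ _
  rw [h1, setIntegral_gauss measurableSet_Iic (fun y => y), integral_id_mul_pdf_Iic]
  have hsd : Real.sqrt d ≠ 0 := (Real.sqrt_pos.2 hd).ne'
  field_simp

lemma scaled_integral_Ici {d : ℝ} (hd : 0 < d) (t : ℝ) :
    ∫ x in Ici t, x ∂(gaussianReal 0 (Real.toNNReal (1/d)))
      = stdNormalPDF (Real.sqrt d * t) / Real.sqrt d := by
  rw [var_eq hd, setIntegral_map (f := fun x : ℝ => x) measurableSet_Ici aestronglyMeasurable_id
    (measurable_const_mul _).aemeasurable, preimage_Ici hd]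
  have h1 : ∫ y in Ici (Real.sqrt d * t), (Real.sqrt d)⁻¹ * y ∂(gaussianReal 0 1)
      = (Real.sqrt d)⁻¹ * ∫ y in Ici (Real.sqrt d * t), y ∂(gaussianReal 0 1) :=
    integral_const_mul _ _
  rw [h1, setIntegral_gauss measurableSet_Ici (fun y => y), integral_id_mul_pdf_Ici]
  have hsd : Real.sqrt d ≠ 0 := (Real.sqrt_pos.2 hd).ne'
  field_simp

lemma condExp_Iic {d : ℝ} (hd : 0 < d) (t : ℝ) :
    condExpId (gaussianReal 0 (Real.toNNReal (1/d))) (Iic t)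
      = -(invMills (Real.sqrt d * t)) / Real.sqrt d := by
  unfold condExpId
  rw [scaled_integral_Iic hd, scaled_measure_Iic hd]
  have h : (gaussianReal 0 1 (Iic (Real.sqrt d * t))).toReal
      = stdNormalCDF (Real.sqrt d * t) := rfl
  rw [h]
  unfold invMills
  ring

lemma condExp_Ici {d : ℝ} (hd : 0 < d) (t : ℝ) :
    condExpId (gaussianReal 0 (Real.toNNReal (1/d))) (Ici t)
      = invMills (-(Real.sqrt d * t)) / Real.sqrt d := by
  unfold condExpId
  rw [scaled_integral_Ici hd, scaled_measure_Ici hd, gauss_Ici_eq_Ioi]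
  have h : (gaussianReal 0 1 (Ioi (Real.sqrt d * t))).toReal
      = 1 - stdNormalCDF (Real.sqrt d * t) := by
    linarith [cdf_add_Ioi (Real.sqrt d * t)]
  rw [h]
  unfold invMills
  rw [pdf_neg, cdf_neg_arg]
  ring

theorem stmt_9 :
    ∃ K : ℝ, 0 < K ∧ ∀ d : ℝ, 0 < d → ∀ b ε : ℝ,
      |condExpId (gaussianReal 0 (Real.toNNReal (1 / d))) (Set.Iic ((b + ε) / Real.sqrt d)) +
          stdNormalPDF b / (stdNormalCDF b * Real.sqrt d)| ≤ K * |ε| / Real.sqrt d ∧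
      |condExpId (gaussianReal 0 (Real.toNNReal (1 / d))) (Set.Ici ((b + ε) / Real.sqrt d)) -
          stdNormalPDF b / ((1 - stdNormalCDF b) * Real.sqrt d)| ≤ K * |ε| / Real.sqrt d := by
  refine ⟨20, by norm_num, fun d hd b ε => ?_⟩
  have hsd : (0:ℝ) < Real.sqrt d := Real.sqrt_pos.2 hd
  have hs : Real.sqrt d * ((b + ε) / Real.sqrt d) = b + ε := by field_simp
  constructor
  · rw [condExp_Iic hd, hs]
    have h1 : stdNormalPDF b / (stdNormalCDF b * Real.sqrt d) = invMills b / Real.sqrt d := by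
      unfold invMills
      rw [div_div]
    rw [h1]
    have h2 : -invMills (b + ε) / Real.sqrt d + invMills b / Real.sqrt d
        = (invMills b - invMills (b + ε)) / Real.sqrt d := by ring
    rw [h2, abs_div, abs_of_pos hsd]
    have h3 := invMills_lipschitz b (b + ε)
    have h4 : |b - (b + ε)| = |ε| := by
      rw [show b - (b + ε) = -ε by ring, abs_neg]
    rw [h4] at h3
    exact div_le_div_of_nonneg_right h3 hsd.le
  · rw [condExp_Ici hd, hs]
    have h1 : stdNormalPDF b / ((1 - stdNormalCDF b) * Real.sqrt d)
        = invMills (-b) / Real.sqrt d := by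
      unfold invMills
      rw [pdf_neg, cdf_neg_arg, div_div]
    rw [h1]
    have h2 : invMills (-(b + ε)) / Real.sqrt d - invMills (-b) / Real.sqrt d
        = (invMills (-(b + ε)) - invMills (-b)) / Real.sqrt d := by ring
    rw [h2, abs_div, abs_of_pos hsd]
    have h3 := invMills_lipschitz (-(b + ε)) (-b)
    have h4 : |-(b + ε) - -b| = |ε| := by
      rw [show -(b + ε) - -b = -ε by ring, abs_neg]
    rw [h4] at h3
    exact div_le_div_of_nonneg_right h3 hsd.le
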